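/- For n ≥ 2, the submonoid of doubly stochastic n×n matrices generated by Robin Hood matrices is a proper submonoid: it does not contain any permutation matrix other than the identity, while the monoid of doubly stochastic matrices contains all permutation matrices. -/

import Mathlib

/-- A matrix is doubly stochastic if it has nonnegative entries and all row and column
sums equal `1`. -/
def DoublyStochastic {n : ℕ} (D : Matrix (Fin n) (Fin n) ℝ) : Prop :=
  (∀ i j, 0 ≤ D i j) ∧ (∀ i, ∑ j, D i j = 1) ∧ (∀ j, ∑ i, D i j = 1)

/-- The Robin Hood matrix `R_{ij}(t)`: the identity except that entries `(i,i)` and `(j,j)`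
are `t` and entries `(i,j)` and `(j,i)` are `1 - t`. -/
noncomputable def rhMatrix (n : ℕ) (i j : Fin n) (t : ℝ) : Matrix (Fin n) (Fin n) ℝ :=
  Matrix.of fun a b =>
    if a = i ∧ b = i then t else if a = j ∧ b = j then t
    else if a = i ∧ b = j then 1 - t else if a = j ∧ b = i then 1 - t
    else if a = b then 1 else 0

/-- A Robin Hood matrix: some `R_{ij}(t)` with `i ≠ j` and `t ∈ [1/2, 1]`. -/
def IsRobinHood {n : ℕ} (R : Matrix (Fin n) (Fin n) ℝ) : Prop :=
  ∃ (i j : Fin n) (t : ℝ), i ≠ j ∧ t ∈ Set.Icc (1 / 2 : ℝ) 1 ∧ R = rhMatrix n i j t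

/-- A permutation matrix. -/
def IsPermMatrix {n : ℕ} (P : Matrix (Fin n) (Fin n) ℝ) : Prop :=
  ∃ σ : Equiv.Perm (Fin n), P = Matrix.of fun a b => if σ a = b then 1 else 0

lemma DS_iff {n : ℕ} {D : Matrix (Fin n) (Fin n) ℝ} :
    DoublyStochastic D ↔ D ∈ doublyStochastic ℝ (Fin n) := by
  rw [mem_doublyStochastic_iff_sum]; rfl

lemma permOf_eq {n : ℕ} (σ : Equiv.Perm (Fin n)) :
    (Matrix.of fun a b => if σ a = b then (1:ℝ) else 0) = σ.permMatrix ℝ := by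
  ext a b
  simp [Equiv.Perm.permMatrix, PEquiv.toMatrix, Equiv.toPEquiv_apply, eq_comm]

lemma rh_eq {n : ℕ} (i j : Fin n) (hij : i ≠ j) (t : ℝ) :
    rhMatrix n i j t = t • (1 : Matrix (Fin n) (Fin n) ℝ)
      + (1 - t) • ((Equiv.swap i j).permMatrix ℝ) := by
  rw [← permOf_eq]
  ext a b
  simp only [rhMatrix, Matrix.of_apply, Matrix.add_apply, Matrix.smul_apply,
    Matrix.one_apply, smul_eq_mul, Equiv.swap_apply_def]
  by_cases hai : a = i <;> by_cases haj : a = j <;> by_cases hbi : b = i <;>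
    by_cases hbj : b = j <;> subst_vars <;> simp_all [eq_comm] <;> (try split_ifs) <;>
    simp_all [eq_comm] <;> ring

lemma rh_mem {n : ℕ} {R : Matrix (Fin n) (Fin n) ℝ} (h : IsRobinHood R) :
    R ∈ doublyStochastic ℝ (Fin n) := by
  obtain ⟨i, j, t, hij, ⟨ht0, ht1⟩, rfl⟩ := h
  rw [rh_eq i j hij t]
  exact convex_doublyStochastic (one_mem _) permMatrix_mem_doublyStochastic
    (by linarith) (by linarith) (by ring)

lemma rh_diag_pos {n : ℕ} {R : Matrix (Fin n) (Fin n) ℝ} (h : IsRobinHood R) (a : Fin n) :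
    0 < R a a := by
  obtain ⟨i, j, t, hij, ⟨ht0, ht1⟩, rfl⟩ := h
  simp only [rhMatrix, Matrix.of_apply]
  split_ifs with h1 h2 h3 h4
  · linarith
  · linarith
  · exact absurd (h3.1.symm.trans h3.2) hij
  · exact absurd (h4.1.symm.trans h4.2) hij.symm
  · linarith

lemma prod_diag_pos {n : ℕ} (L : List (Matrix (Fin n) (Fin n) ℝ))
    (hL : ∀ R ∈ L, IsRobinHood R) (a : Fin n) : 0 < L.prod a a := by
  induction L with
  | nil => simp [Matrix.one_apply]
  | cons R L ih =>
    have hR : IsRobinHood R := hL R List.mem_cons_self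
    have hL' : ∀ S ∈ L, IsRobinHood S := fun S hS => hL S (List.mem_cons_of_mem _ hS)
    have hM : L.prod ∈ doublyStochastic ℝ (Fin n) :=
      Submonoid.list_prod_mem _ (fun S hS => rh_mem (hL' S hS))
    have hRm : R ∈ doublyStochastic ℝ (Fin n) := rh_mem hR
    rw [List.prod_cons, Matrix.mul_apply]
    have key : R a a * L.prod a a ≤ ∑ b, R a b * L.prod b a :=
      Finset.single_le_sum (fun b _ => mul_nonneg (hRm.1 a b) (hM.1 b a)) (Finset.mem_univ a)
    have := mul_pos (rh_diag_pos hR a) (ih hL')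
    linarith

/-- For `n ≥ 2`, the monoid generated by Robin Hood matrices is a proper submonoid of the
doubly stochastic matrices: all permutation matrices are doubly stochastic, products of Robin
Hood matrices are doubly stochastic, but some doubly stochastic (in fact permutation) matrix is
not a product of Robin Hood matrices. -/
theorem robinHood_proper_submonoid (n : ℕ) (hn : 2 ≤ n) :
    (∀ P : Matrix (Fin n) (Fin n) ℝ, IsPermMatrix P → DoublyStochastic P) ∧
    (∀ L : List (Matrix (Fin n) (Fin n) ℝ), (∀ R ∈ L, IsRobinHood R) →
      DoublyStochastic L.prod) ∧
    (∃ D : Matrix (Fin n) (Fin n) ℝ, IsPermMatrix D ∧ DoublyStochastic D ∧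
      ∀ L : List (Matrix (Fin n) (Fin n) ℝ), (∀ R ∈ L, IsRobinHood R) → L.prod ≠ D) := by
  refine ⟨?_, ?_, ?_⟩
  · rintro P ⟨σ, rfl⟩
    rw [DS_iff, permOf_eq]
    exact permMatrix_mem_doublyStochastic
  · intro L hL
    rw [DS_iff]
    exact Submonoid.list_prod_mem _ (fun S hS => rh_mem (hL S hS))
  · set i0 : Fin n := ⟨0, by omega⟩
    set i1 : Fin n := ⟨1, by omega⟩
    have h01 : i0 ≠ i1 := by simp [i0, i1, Fin.ext_iff]
    set σ := Equiv.swap i0 i1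
    refine ⟨Matrix.of fun a b => if σ a = b then 1 else 0, ⟨σ, rfl⟩, ?_, ?_⟩
    · rw [DS_iff, permOf_eq]; exact permMatrix_mem_doublyStochastic
    · intro L hL hEq
      have hpos := prod_diag_pos L hL i0
      rw [hEq] at hpos
      simp only [Matrix.of_apply, σ, Equiv.swap_apply_left] at hpos
      rw [if_neg (Ne.symm h01)] at hpos
      exact lt_irrefl _ hpos
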